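/- Let u(x) = u₀(|x|) be a nonnegative radial locally integrable function on ℝⁿ. Then the centered Hardy–Littlewood maximal function satisfies Mu(x) ≤ 2·𝒜u(x) for all x, where 𝒜u(x) = sup over 0 ≤ a ≤ |x| ≤ b of the average of u over the annulus {a ≤ |y| ≤ b}. -/

import Mathlib

set_option maxHeartbeats 1600000
set_option linter.unusedSectionVars false
set_option linter.unusedVariables false

open Set Function Metric MeasureTheory
open scoped ENNReal RealInnerProductSpace

noncomputable section

variable {E : Type*} [NormedAddCommGroup E] [InnerProductSpace ℝ E]

def Qf (x y : E) : ℝ := ⟪x, y⟫ / ‖y‖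

def df (x : E) (R : ℝ) (y : E) : ℝ := (Qf x y)^2 - ‖x‖^2 + R^2

def s0f (x : E) (R : ℝ) (y : E) : ℝ := Qf x y + Real.sqrt (df x R y)

def Gam (x : E) (R : ℝ) : Set E :=
  {y | 0 < ‖y‖ ∧ ‖y‖ ≤ ‖x‖ ∧ 0 ≤ df x R y ∧ 0 < s0f x R y ∧ s0f x R y ≤ ‖y‖}

lemma Qf_smul (x : E) {r : ℝ} (hr : 0 < r) {ω : E} (hω : ‖ω‖ = 1) :
    Qf x (r • ω) = ⟪x, ω⟫ := by
  simp only [Qf, inner_smul_right, norm_smul, Real.norm_eq_abs, abs_of_pos hr, hω, mul_one]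
  field_simp

lemma gam_subset_closedBall (x : E) {R : ℝ} (hR : 0 < R) :
    Gam x R ⊆ closedBall ((Real.sqrt (‖x‖^2 - R^2) / ‖x‖) • x) R := by
  intro y hy
  obtain ⟨h0, h1, h2, h3, h4⟩ := hy
  set T := ‖x‖ with hT
  set s := ‖y‖ with hs
  set Q := Qf x y with hQ
  rcases le_or_gt T R with hTR | hRT
  · have hz : Real.sqrt (T^2 - R^2) = 0 := by
      apply Real.sqrt_eq_zero'.2; nlinarith
    rw [hz]
    simp only [zero_div, zero_smul, mem_closedBall, dist_zero_right]
    exact h1.trans hTR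
  · have hTpos : 0 < T := hR.trans hRT
    set rst := Real.sqrt (T^2 - R^2) with hrst
    have hrstnn : 0 ≤ rst := Real.sqrt_nonneg _
    have hrstsq : rst^2 = T^2 - R^2 := Real.sq_sqrt (by nlinarith)
    have hrstT : rst ≤ T := by nlinarith
    have h2' : 0 ≤ Q^2 - T^2 + R^2 := h2
    have hsqd : (Real.sqrt (df x R y))^2 = df x R y := Real.sq_sqrt h2
    have hsdnn : 0 ≤ Real.sqrt (df x R y) := Real.sqrt_nonneg _
    have hQpos : 0 < Q := by
      by_contra hc
      push_neg at hc
      have h5 : Real.sqrt (df x R y) > -Q := by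
        have := h3; simp only [s0f] at this; linarith
      have h6 : df x R y > Q^2 := by nlinarith
      have h7 : df x R y = Q^2 - T^2 + R^2 := rfl
      nlinarith
    have hQrst : rst ≤ Q := by
      have : rst ≤ Real.sqrt (Q^2) := Real.sqrt_le_sqrt (by linarith)
      rwa [Real.sqrt_sq hQpos.le] at this
    set s₀ := s0f x R y with hs0
    have hs0eq : s₀^2 - 2*Q*s₀ + T^2 - R^2 = 0 := by
      have h8 : (s₀ - Q)^2 = df x R y := by
        simp only [hs0, s0f]; ring_nf; nlinarith [hsqd]
      have h7 : df x R y = Q^2 - T^2 + R^2 := rfl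
      nlinarith
    have hs0pos : 0 < s₀ := h3
    have hs0s : s₀ ≤ s := h4
    have hsT : s ≤ T := h1
    have hs0T : s₀ ≤ T := hs0s.trans hsT
    rw [mem_closedBall, dist_eq_norm]
    have hxy : ⟪x, y⟫ = Q * s := by
      rw [hQ, Qf, ← hs]; field_simp
    have hinner : ⟪y, (rst / T) • x⟫ = (rst / T) * (Q * s) := by
      rw [real_inner_smul_right, real_inner_comm, hxy]
    have hnc0 : ‖(rst / T) • x‖ = rst := by
      rw [norm_smul, Real.norm_eq_abs, abs_of_nonneg (div_nonneg hrstnn hTpos.le), ← hT,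
        div_mul_cancel₀ _ hTpos.ne']
    have hnc : ‖(rst / T) • x‖^2 = rst^2 := by rw [hnc0]
    have hexp : ‖y - (rst / T) • x‖^2 = s^2 - 2*((rst/T)*(Q*s)) + rst^2 := by
      rw [norm_sub_sq_real, hinner, hnc, ← hs]
    -- endpoint bounds for the quadratic  P(t) = T*t^2 - 2*rst*Q*t + T*rst^2 - T*R^2
    have hfT : T*T^2 - 2*rst*Q*T + T*rst^2 - T*R^2 ≤ 0 := by
      nlinarith [mul_nonneg (mul_nonneg hTpos.le hrstnn) (sub_nonneg.2 hQrst)]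
    have h2Q : 2*Q*s₀ ≤ T^2 + T*rst := by
      nlinarith [mul_nonneg hrstnn (sub_nonneg.2 hrstT),
        mul_nonneg (sub_nonneg.2 hs0T) (add_pos hTpos hs0pos).le]
    have hfs0 : T*s₀^2 - 2*rst*Q*s₀ + T*rst^2 - T*R^2 ≤ 0 := by
      nlinarith [mul_nonneg (sub_nonneg.2 hrstT) (sub_nonneg.2 h2Q)]
    have hnum : T*s^2 - 2*rst*Q*s + T*rst^2 - T*R^2 ≤ 0 := by
      rcases le_total (T*(s₀+T) - 2*rst*Q) 0 with hγ | hγ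
      · nlinarith [hfs0, mul_nonpos_of_nonneg_of_nonpos (sub_nonneg.2 hs0s) hγ,
          mul_nonneg (mul_nonneg hTpos.le (sub_nonneg.2 hs0s)) (sub_nonneg.2 hsT)]
      · nlinarith [hfT, mul_nonneg (sub_nonneg.2 hsT) hγ,
          mul_nonneg (mul_nonneg hTpos.le (sub_nonneg.2 hsT)) (sub_nonneg.2 hs0s)]
    have hn2 : ‖y - (rst / T) • x‖^2 ≤ R^2 := by
      rw [hexp]
      have hfrac : s^2 - 2*((rst/T)*(Q*s)) + rst^2 - R^2
          = (T*s^2 - 2*rst*Q*s + T*rst^2 - T*R^2)/T := by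
        field_simp
      nlinarith [div_nonpos_of_nonpos_of_nonneg hnum hTpos.le, hfrac]
    nlinarith [hn2, norm_nonneg (y - (rst / T) • x), hR,
      sq_nonneg (‖y - (rst / T) • x‖ - R)]

lemma slice_lemma (x : E) {R : ℝ} (hR : 0 < R) {ω : E} (hω : ‖ω‖ = 1) :
    ∃ α β : ℝ, 0 ≤ α ∧ α ≤ ‖x‖ ∧ ‖x‖ ≤ β ∧
      (∀ r : ℝ, 0 < r → r • ω ∈ ball x R ∪ Gam x R → r ∈ Icc α β) ∧
      (∀ r : ℝ, 0 < r → r ∈ Ioo α β → r • ω ∈ ball x R ∪ Gam x R) := by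
  set T := ‖x‖ with hT
  set c := ⟪x, ω⟫ with hc
  set d := c^2 - T^2 + R^2 with hd
  set sd := Real.sqrt d with hsd
  have hTnn : 0 ≤ T := norm_nonneg x
  have hcT : c ≤ T := by
    calc c ≤ ‖x‖ * ‖ω‖ := real_inner_le_norm x ω
    _ = T := by rw [hω, mul_one]
  -- membership characterizations
  have hball : ∀ r : ℝ, 0 < r → (r • ω ∈ ball x R ↔ r^2 - 2*c*r + T^2 < R^2) := by
    intro r hr
    rw [mem_ball, dist_eq_norm]
    have hnorm2 : ‖r • ω - x‖^2 = r^2 - 2*c*r + T^2 := by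
      have hc' : ⟪ω, x⟫ = c := by rw [hc, real_inner_comm]
      rw [norm_sub_sq_real, real_inner_smul_left, hc', norm_smul,
        Real.norm_eq_abs, abs_of_pos hr, hω, mul_one, ← hT]
      ring
    constructor
    · intro h
      nlinarith [hnorm2, norm_nonneg (r • ω - x), hR]
    · intro h
      nlinarith [hnorm2, norm_nonneg (r • ω - x), hR]
  have hgam : ∀ r : ℝ, 0 < r →
      (r • ω ∈ Gam x R ↔ (r ≤ T ∧ 0 ≤ d ∧ 0 < c + sd ∧ c + sd ≤ r)) := by
    intro r hr
    have hnr : ‖r • ω‖ = r := by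
      rw [norm_smul, Real.norm_eq_abs, abs_of_pos hr, hω, mul_one]
    have hQ : Qf x (r • ω) = c := Qf_smul x hr hω
    have hdf : df x R (r • ω) = d := by rw [df, hQ, ← hT, hd]
    have hs0 : s0f x R (r • ω) = c + sd := by rw [s0f, hQ, hdf, hsd]
    simp only [Gam, mem_setOf_eq, hnr, hdf, hs0, hr, true_and]
    try tauto
  rcases le_or_gt 0 d with hdnn | hdneg
  · rcases lt_or_ge 0 (c + sd) with hs0pos | hs0np
    · -- main case
      have hsdnn : 0 ≤ sd := Real.sqrt_nonneg _
      have hsd2 : sd^2 = d := Real.sq_sqrt hdnn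
      refine ⟨max (c - sd) 0, max (c + sd) T, le_max_right _ _,
        max_le (by linarith) hTnn, le_max_right _ _, ?_, ?_⟩
      · rintro r hr (hmem | hmem)
        · rw [hball r hr] at hmem
          have h1 : (r - c)^2 < sd^2 := by rw [hsd2]; nlinarith
          have h2 : r - c < sd := by nlinarith
          have h3 : c - sd < r := by nlinarith
          exact ⟨max_le h3.le hr.le, le_max_iff.2 (Or.inl (by linarith))⟩
        · rw [hgam r hr] at hmem
          obtain ⟨hrT, _, _, hcr⟩ := hmem
          exact ⟨max_le (by linarith) hr.le, le_max_iff.2 (Or.inr hrT)⟩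
      · rintro r hr ⟨hlo, hhi⟩
        rcases lt_or_ge r (c + sd) with hlt | hge
        · left
          rw [hball r hr]
          have h3 : c - sd < r := lt_of_le_of_lt (le_max_left _ _) hlo
          have : (r - c)^2 < sd^2 := by nlinarith
          nlinarith
        · right
          rw [hgam r hr]
          have hrT : r < T := by
            rcases max_cases (c + sd) T with ⟨heq, hge'⟩ | ⟨heq, hlt'⟩
            · rw [heq] at hhi; linarith
            · rw [heq] at hhi; exact hhi
          exact ⟨hrT.le, hdnn, hs0pos, hge⟩
    · -- far side: slice is empty
      refine ⟨T, T, hTnn, le_refl _, le_refl _, ?_, ?_⟩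
      · rintro r hr (hmem | hmem)
        · rw [hball r hr] at hmem
          have hsdnn : 0 ≤ sd := Real.sqrt_nonneg _
          have hsd2 : sd^2 = d := Real.sq_sqrt hdnn
          have h1 : (r - c)^2 < sd^2 := by rw [hsd2]; nlinarith
          have h2 : r - c < sd := by nlinarith
          exfalso; linarith
        · rw [hgam r hr] at hmem
          exfalso; obtain ⟨_, _, h', _⟩ := hmem; linarith
      · rintro r hr ⟨hlo, hhi⟩; exfalso; linarith
  · -- negative discriminant: slice is empty
    refine ⟨T, T, hTnn, le_refl _, le_refl _, ?_, ?_⟩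
    · rintro r hr (hmem | hmem)
      · rw [hball r hr] at hmem
        exfalso; nlinarith [sq_nonneg (r - c)]
      · rw [hgam r hr] at hmem
        exfalso; obtain ⟨_, h', _, _⟩ := hmem; linarith
    · rintro r hr ⟨hlo, hhi⟩; exfalso; linarith

local notation "dim" => Module.finrank ℝ

section Polar

variable {E : Type*} [NormedAddCommGroup E] [NormedSpace ℝ E]
  [MeasurableSpace E] [BorelSpace E] [FiniteDimensional ℝ E] [Nontrivial E]

lemma polar_integrable (μ : Measure E) [μ.IsAddHaarMeasure] (g : E → ℝ) (hg : Integrable g μ) :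
    Integrable (fun z : sphere (0:E) 1 × Ioi (0:ℝ) => g ((z.2 : ℝ) • (z.1 : E)))
      (μ.toSphere.prod (Measure.volumeIoiPow (dim E - 1))) := by
  have hemb := (homeomorphUnitSphereProd E).measurableEmbedding
  have mp := μ.measurePreserving_homeomorphUnitSphereProd
  set F : sphere (0:E) 1 × Ioi (0:ℝ) → ℝ := fun z => g ((z.2 : ℝ) • (z.1 : E)) with hF
  have hcomp : ∀ y : ({0}ᶜ : Set E), F (homeomorphUnitSphereProd E y) = g y := by
    intro y
    simp only [F, homeomorphUnitSphereProd_apply_snd_coe, homeomorphUnitSphereProd_apply_fst_coe]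
    rw [smul_inv_smul₀ (norm_ne_zero_iff.2 y.2)]
  have hint0 : Integrable (fun y : ({0}ᶜ : Set E) => g y) (μ.comap Subtype.val) := by
    have h1 : Integrable g (Measure.map Subtype.val (μ.comap (Subtype.val :
        ({0}ᶜ : Set E) → E))) := by
      rw [MeasurableEmbedding.map_comap (MeasurableEmbedding.subtype_coe
        (measurableSet_singleton (0:E)).compl)]
      exact hg.restrict
    exact (MeasurableEmbedding.integrable_map_iff (MeasurableEmbedding.subtype_coe
      (measurableSet_singleton (0:E)).compl)).1 h1
  rw [← mp.integrable_comp_emb hemb]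
  exact hint0.congr (Filter.Eventually.of_forall fun y => (hcomp y).symm)

lemma polar_integral (μ : Measure E) [μ.IsAddHaarMeasure] (g : E → ℝ) (hg : Integrable g μ) :
    ∫ y, g y ∂μ = ∫ ω : sphere (0:E) 1, ∫ r : Ioi (0:ℝ),
      g ((r:ℝ) • (ω:E)) ∂(Measure.volumeIoiPow (dim E - 1)) ∂μ.toSphere := by
  have hemb := (homeomorphUnitSphereProd E).measurableEmbedding
  have mp := μ.measurePreserving_homeomorphUnitSphereProd
  set F : sphere (0:E) 1 × Ioi (0:ℝ) → ℝ := fun z => g ((z.2 : ℝ) • (z.1 : E)) with hF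
  have hcomp : ∀ y : ({0}ᶜ : Set E), F (homeomorphUnitSphereProd E y) = g y := by
    intro y
    simp only [F, homeomorphUnitSphereProd_apply_snd_coe, homeomorphUnitSphereProd_apply_fst_coe]
    rw [smul_inv_smul₀ (norm_ne_zero_iff.2 y.2)]
  have hintF := polar_integrable μ g hg
  calc ∫ y, g y ∂μ = ∫ y : ({0}ᶜ : Set E), g y ∂(μ.comap Subtype.val) := by
        rw [integral_subtype_comap (measurableSet_singleton _).compl,
          MeasureTheory.restrict_compl_singleton]
      _ = ∫ z, F z ∂(μ.toSphere.prod (Measure.volumeIoiPow (dim E - 1))) := by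
        rw [← mp.integral_comp hemb F]
        exact integral_congr_ae (Filter.Eventually.of_forall fun y => (hcomp y).symm)
      _ = _ := MeasureTheory.integral_prod F hintF

lemma polar_setIntegral (μ : Measure E) [μ.IsAddHaarMeasure] (g : E → ℝ) {S : Set E}
    (hS : MeasurableSet S) (hg : IntegrableOn g S μ) :
    ∫ y in S, g y ∂μ = ∫ ω : sphere (0:E) 1, ∫ r : Ioi (0:ℝ),
      S.indicator g ((r:ℝ) • (ω:E)) ∂(Measure.volumeIoiPow (dim E - 1)) ∂μ.toSphere := by
  rw [← integral_indicator hS]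
  exact polar_integral μ (S.indicator g) ((integrable_indicator_iff hS).2 hg)

lemma polar_setIntegrable (μ : Measure E) [μ.IsAddHaarMeasure] (g : E → ℝ) {S : Set E}
    (hS : MeasurableSet S) (hg : IntegrableOn g S μ) :
    Integrable (fun z : sphere (0:E) 1 × Ioi (0:ℝ) => S.indicator g ((z.2 : ℝ) • (z.1 : E)))
      (μ.toSphere.prod (Measure.volumeIoiPow (dim E - 1))) :=
  polar_integrable μ (S.indicator g) ((integrable_indicator_iff hS).2 hg)

lemma volumeIoiPow_singleton (m : ℕ) (t : Ioi (0:ℝ)) :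
    Measure.volumeIoiPow m {t} = 0 := by
  rw [Measure.volumeIoiPow, withDensity_apply _ (measurableSet_singleton t)]
  have h0 : (volume.comap (Subtype.val : Ioi (0:ℝ) → ℝ)) {t} = 0 := by
    rw [MeasurableEmbedding.comap_apply (MeasurableEmbedding.subtype_coe measurableSet_Ioi)]
    simp
  exact setLIntegral_measure_zero _ _ h0

instance (m : ℕ) : NullSingletonClass (Measure.volumeIoiPow m) :=
  ⟨fun t => volumeIoiPow_singleton m t⟩

end Polar


section CoreSec

variable {E : Type*} [NormedAddCommGroup E] [InnerProductSpace ℝ E]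
  [MeasurableSpace E] [BorelSpace E] [FiniteDimensional ℝ E] [Nontrivial E]

lemma gam_measurableSet (x : E) (R : ℝ) : MeasurableSet (Gam x R) := by
  have hn : Measurable fun y : E => ‖y‖ := measurable_norm
  have hQ : Measurable fun y : E => Qf x y :=
    ((continuous_const.inner continuous_id).measurable).div hn
  have hd : Measurable fun y : E => df x R y := by
    have h : (fun y : E => df x R y) = fun y => (Qf x y)^2 - ‖x‖^2 + R^2 := rfl
    rw [h]; exact ((hQ.pow_const 2).sub_const _).add_const _
  have hs0 : Measurable fun y : E => s0f x R y := by
    have h : (fun y : E => s0f x R y) = fun y => Qf x y + Real.sqrt (df x R y) := rfl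
    rw [h]; exact hQ.add (Real.continuous_sqrt.measurable.comp hd)
  exact (measurableSet_lt measurable_const hn).inter ((measurableSet_le hn measurable_const).inter
    ((measurableSet_le measurable_const hd).inter ((measurableSet_lt measurable_const hs0).inter
      (measurableSet_le hs0 hn))))

lemma core (μ : Measure E) [μ.IsAddHaarMeasure] (u : E → ℝ) (u₀ : ℝ → ℝ)
    (hval : ∀ r : ℝ, 0 < r → ∀ ω : E, ‖ω‖ = 1 → u (r • ω) = u₀ r)
    (hpos : ∀ y, 0 ≤ u y) (hloc : LocallyIntegrable u μ)
    (x : E) (R : ℝ) (hR : 0 < R) :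
    ∃ a b : ℝ, 0 ≤ a ∧ a ≤ ‖x‖ ∧ ‖x‖ ≤ b ∧
      ⨍ y in Metric.ball x R, u y ∂μ ≤
        2 * ⨍ y in {y : E | a ≤ ‖y‖ ∧ ‖y‖ ≤ b}, u y ∂μ := by
  obtain ⟨v, hv⟩ := exists_ne (0 : E)
  have hv' : ‖v‖ ≠ 0 := norm_ne_zero_iff.2 hv
  set ω₀ : E := ‖v‖⁻¹ • v with hω₀def
  have hω₀ : ‖ω₀‖ = 1 := by
    rw [hω₀def, norm_smul, norm_inv, norm_norm, inv_mul_cancel₀ hv']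
  by_contra hcon
  push_neg at hcon
  set T := ‖x‖ with hT
  have hT0 : 0 ≤ T := norm_nonneg x
  set K : ℝ := (⨍ y in Metric.ball x R, u y ∂μ) / 2 with hK
  have hvolBpos : 0 < μ (Metric.ball x R) := measure_ball_pos _ _ hR
  have hvolBfin : μ (Metric.ball x R) ≠ ⊤ := measure_ball_lt_top.ne
  have hBtoReal : 0 < (μ (Metric.ball x R)).toReal :=
    ENNReal.toReal_pos hvolBpos.ne' hvolBfin
  have hIntB : IntegrableOn u (Metric.ball x R) μ :=
    (hloc.integrableOn_isCompact (isCompact_closedBall x R)).mono_set ball_subset_closedBall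
  have hu0nn : ∀ r : ℝ, 0 < r → 0 ≤ u₀ r := by
    intro r hr; rw [← hval r hr ω₀ hω₀]; exact hpos _
  have havgB : ⨍ y in Metric.ball x R, u y ∂μ
      = (μ (Metric.ball x R)).toReal⁻¹ * ∫ y in Metric.ball x R, u y ∂μ := by
    rw [setAverage_eq, smul_eq_mul, measureReal_def]
  have hKnn : 0 ≤ K := by
    rw [hK, havgB]
    have h1 : 0 ≤ ∫ y in Metric.ball x R, u y ∂μ :=
      setIntegral_nonneg measurableSet_ball fun y _ => hpos y
    positivity
  have hintBall : ∫ y in Metric.ball x R, u y ∂μ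
      = K * ((μ (Metric.ball x R)).toReal * 2) := by
    have h2K : 2 * K = (μ (Metric.ball x R)).toReal⁻¹
        * ∫ y in Metric.ball x R, u y ∂μ := by
      rw [hK, ← havgB]; ring
    field_simp at h2K
    linarith [h2K]
  -- consequence of the contradiction hypothesis for annuli
  have hAnn : ∀ α β : ℝ, 0 ≤ α → α ≤ T → T ≤ β →
      (∫ y in {y : E | α ≤ ‖y‖ ∧ ‖y‖ ≤ β}, u y ∂μ
        ≤ K * (μ {y : E | α ≤ ‖y‖ ∧ ‖y‖ ≤ β}).toReal) ∧
      (μ {y : E | α ≤ ‖y‖ ∧ ‖y‖ ≤ β} ≠ 0 →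
        ∫ y in {y : E | α ≤ ‖y‖ ∧ ‖y‖ ≤ β}, u y ∂μ
          < K * (μ {y : E | α ≤ ‖y‖ ∧ ‖y‖ ≤ β}).toReal) := by
    intro α β hα hαT hTβ
    have hmono := hcon α β hα hαT hTβ
    have hAvg : ⨍ y in {y : E | α ≤ ‖y‖ ∧ ‖y‖ ≤ β}, u y ∂μ < K := by
      rw [hK]; linarith
    have hfin : μ {y : E | α ≤ ‖y‖ ∧ ‖y‖ ≤ β} ≠ ⊤ := by
      refine ((measure_mono ?_).trans_lt (measure_closedBall_lt_top (x := (0:E)) (r := β))).ne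
      intro y hy; exact mem_closedBall_zero_iff.2 hy.2
    by_cases h0 : μ {y : E | α ≤ ‖y‖ ∧ ‖y‖ ≤ β} = 0
    · have hz : ∫ y in {y : E | α ≤ ‖y‖ ∧ ‖y‖ ≤ β}, u y ∂μ = 0 := by
        rw [Measure.restrict_eq_zero.2 h0, integral_zero_measure]
      refine ⟨?_, fun hne => absurd h0 hne⟩
      rw [hz, h0]; simp
    · have htR : 0 < (μ {y : E | α ≤ ‖y‖ ∧ ‖y‖ ≤ β}).toReal :=
        ENNReal.toReal_pos h0 hfin
      have havg2 : ⨍ y in {y : E | α ≤ ‖y‖ ∧ ‖y‖ ≤ β}, u y ∂μ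
          = (μ {y : E | α ≤ ‖y‖ ∧ ‖y‖ ≤ β}).toReal⁻¹
            * ∫ y in {y : E | α ≤ ‖y‖ ∧ ‖y‖ ≤ β}, u y ∂μ := by
        rw [setAverage_eq, smul_eq_mul, measureReal_def]
      rw [havg2, inv_mul_eq_div, div_lt_iff₀ htR] at hAvg
      exact ⟨by nlinarith, fun _ => by nlinarith⟩
  -- sphere measure facts
  have hdimpos : 0 < dim E := Module.finrank_pos
  have hSne : μ.toSphere univ ≠ 0 := by
    rw [Measure.toSphere_apply_univ]
    exact mul_ne_zero (by exact_mod_cast hdimpos.ne') (measure_ball_pos μ 0 one_pos).ne'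
  have hSfin : μ.toSphere univ ≠ ⊤ := measure_ne_top _ _
  have hSpos : 0 < (μ.toSphere univ).toReal := ENNReal.toReal_pos hSne hSfin
  have hσne : μ.toSphere ≠ 0 := by
    intro h; exact hSne (by rw [h]; rfl)
  haveI hNeBot : (ae μ.toSphere).NeBot := ae_neBot.2 hσne
  -- the enlarged set
  set EE := Metric.ball x R ∪ Gam x R with hEEdef
  have hGmeas : MeasurableSet (Gam x R) := gam_measurableSet x R
  have hEEmeas : MeasurableSet EE := measurableSet_ball.union hGmeas
  have hEEbdd : EE ⊆ closedBall (0:E) (T+R) := by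
    rintro y (hy | hy)
    · rw [mem_ball, dist_eq_norm] at hy
      rw [mem_closedBall_zero_iff]
      calc ‖y‖ = ‖(y - x) + x‖ := by rw [sub_add_cancel]
        _ ≤ ‖y - x‖ + ‖x‖ := norm_add_le _ _
        _ ≤ T + R := by rw [hT]; linarith
    · rw [mem_closedBall_zero_iff]
      exact hy.2.1.trans (by linarith)
  have hIntEE : IntegrableOn u EE μ :=
    (hloc.integrableOn_isCompact (isCompact_closedBall (0:E) (T+R))).mono_set hEEbdd
  have hvolEEfin : μ EE ≠ ⊤ :=
    ((measure_mono hEEbdd).trans_lt measure_closedBall_lt_top).ne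
  have hvolEE2 : μ EE ≤ 2 * μ (Metric.ball x R) := by
    have h1 : μ (Gam x R) ≤ μ (Metric.ball x R) := by
      have h2 := measure_mono (μ := μ) (gam_subset_closedBall x hR)
      have h3 : μ (closedBall ((Real.sqrt (‖x‖^2 - R^2) / ‖x‖) • x) R)
          = μ (Metric.ball x R) := by
        rw [Measure.addHaar_closedBall _ _ hR.le, Measure.addHaar_ball _ _ hR.le]
      exact h2.trans h3.le
    calc μ EE ≤ μ (Metric.ball x R) + μ (Gam x R) := measure_union_le _ _
      _ ≤ μ (Metric.ball x R) + μ (Metric.ball x R) := add_le_add_right h1 _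
      _ = 2 * μ (Metric.ball x R) := (two_mul _).symm
  -- polar decomposition of the integrals over EE
  have honeEE : IntegrableOn (fun _ : E => (1:ℝ)) EE μ :=
    integrableOn_const hvolEEfin
  have hEEu : ∫ y in EE, u y ∂μ = ∫ ω : sphere (0:E) 1, (∫ r : Ioi (0:ℝ),
      EE.indicator u ((r:ℝ) • (ω:E)) ∂(Measure.volumeIoiPow (dim E - 1))) ∂μ.toSphere :=
    polar_setIntegral μ u hEEmeas hIntEE
  have hEE1 : (μ EE).toReal = ∫ ω : sphere (0:E) 1, (∫ r : Ioi (0:ℝ),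
      EE.indicator (fun _ => (1:ℝ)) ((r:ℝ) • (ω:E)) ∂(Measure.volumeIoiPow (dim E - 1)))
        ∂μ.toSphere := by
    have h := polar_setIntegral μ (fun _ => (1:ℝ)) hEEmeas honeEE
    rw [setIntegral_const, smul_eq_mul, mul_one] at h
    exact h
  have hFν := polar_setIntegrable μ u hEEmeas hIntEE
  have hFs := polar_setIntegrable μ (fun _ => (1:ℝ)) hEEmeas honeEE
  have hνint : Integrable (fun ω : sphere (0:E) 1 => ∫ r : Ioi (0:ℝ),
      EE.indicator u ((r:ℝ) • (ω:E)) ∂(Measure.volumeIoiPow (dim E - 1))) μ.toSphere :=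
    hFν.integral_prod_left
  have hsgint : Integrable (fun ω : sphere (0:E) 1 => ∫ r : Ioi (0:ℝ),
      EE.indicator (fun _ => (1:ℝ)) ((r:ℝ) • (ω:E)) ∂(Measure.volumeIoiPow (dim E - 1)))
        μ.toSphere :=
    hFs.integral_prod_left
  have hsgnn : ∀ ω : sphere (0:E) 1, 0 ≤ ∫ r : Ioi (0:ℝ),
      EE.indicator (fun _ => (1:ℝ)) ((r:ℝ) • (ω:E)) ∂(Measure.volumeIoiPow (dim E - 1)) :=
    fun ω => integral_nonneg fun r => indicator_nonneg (fun _ _ => zero_le_one) _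
  have hνnn : ∀ ω : sphere (0:E) 1, 0 ≤ ∫ r : Ioi (0:ℝ),
      EE.indicator u ((r:ℝ) • (ω:E)) ∂(Measure.volumeIoiPow (dim E - 1)) :=
    fun ω => integral_nonneg fun r => indicator_nonneg (fun y _ => hpos y) _
  -- the slice estimate
  have hslice : ∀ᵐ ω : sphere (0:E) 1 ∂μ.toSphere,
      (∫ r : Ioi (0:ℝ), EE.indicator u ((r:ℝ) • (ω:E)) ∂(Measure.volumeIoiPow (dim E - 1)))
        ≤ K * ∫ r : Ioi (0:ℝ), EE.indicator (fun _ => (1:ℝ)) ((r:ℝ) • (ω:E))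
            ∂(Measure.volumeIoiPow (dim E - 1)) ∧
      (0 < (∫ r : Ioi (0:ℝ), EE.indicator (fun _ => (1:ℝ)) ((r:ℝ) • (ω:E))
            ∂(Measure.volumeIoiPow (dim E - 1))) →
        (∫ r : Ioi (0:ℝ), EE.indicator u ((r:ℝ) • (ω:E)) ∂(Measure.volumeIoiPow (dim E - 1)))
          < K * ∫ r : Ioi (0:ℝ), EE.indicator (fun _ => (1:ℝ)) ((r:ℝ) • (ω:E))
              ∂(Measure.volumeIoiPow (dim E - 1))) := by
    filter_upwards [hFs.prod_right_ae] with ω hsint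
    have hωn : ‖(ω:E)‖ = 1 := mem_sphere_zero_iff_norm.1 ω.2
    obtain ⟨α, β, hα0, hαT, hTβ, hsubI, hsupI⟩ := slice_lemma x hR hωn
    -- the annulus determined by the slice
    have hAnmeas : MeasurableSet {y : E | α ≤ ‖y‖ ∧ ‖y‖ ≤ β} :=
      (measurableSet_le measurable_const measurable_norm).inter
        (measurableSet_le measurable_norm measurable_const)
    have hAnbdd : {y : E | α ≤ ‖y‖ ∧ ‖y‖ ≤ β} ⊆ closedBall (0:E) β := by
      intro y hy; exact mem_closedBall_zero_iff.2 hy.2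
    have hIntAn : IntegrableOn u {y : E | α ≤ ‖y‖ ∧ ‖y‖ ≤ β} μ :=
      (hloc.integrableOn_isCompact (isCompact_closedBall (0:E) β)).mono_set hAnbdd
    have honeAn : IntegrableOn (fun _ : E => (1:ℝ)) {y : E | α ≤ ‖y‖ ∧ ‖y‖ ≤ β} μ := by
      refine integrableOn_const ?_
      exact ((measure_mono hAnbdd).trans_lt measure_closedBall_lt_top).ne
    -- slice identification for the annulus (valid for every unit direction)
    have hkeyu : ∀ (ω' : sphere (0:E) 1) (r : Ioi (0:ℝ)),
        ({y : E | α ≤ ‖y‖ ∧ ‖y‖ ≤ β}).indicator u ((r:ℝ) • (ω':E))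
          = (Icc α β).indicator u₀ (r:ℝ) := by
      intro ω' r
      have hω' : ‖(ω':E)‖ = 1 := mem_sphere_zero_iff_norm.1 ω'.2
      have hr : 0 < (r:ℝ) := r.2
      have hnr : ‖(r:ℝ) • (ω':E)‖ = (r:ℝ) := by
        rw [norm_smul, Real.norm_eq_abs, abs_of_pos hr, hω', mul_one]
      by_cases hmem : (r:ℝ) ∈ Icc α β
      · rw [indicator_of_mem hmem, indicator_of_mem (by
          simp only [mem_setOf_eq, hnr]; exact ⟨hmem.1, hmem.2⟩), hval _ hr _ hω']
      · rw [indicator_of_notMem hmem, indicator_of_notMem (by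
          simp only [mem_setOf_eq, hnr]; exact fun h => hmem ⟨h.1, h.2⟩)]
    have hkey1 : ∀ (ω' : sphere (0:E) 1) (r : Ioi (0:ℝ)),
        ({y : E | α ≤ ‖y‖ ∧ ‖y‖ ≤ β}).indicator (fun _ => (1:ℝ)) ((r:ℝ) • (ω':E))
          = (Icc α β).indicator (fun _ => (1:ℝ)) (r:ℝ) := by
      intro ω' r
      have hω' : ‖(ω':E)‖ = 1 := mem_sphere_zero_iff_norm.1 ω'.2
      have hr : 0 < (r:ℝ) := r.2
      have hnr : ‖(r:ℝ) • (ω':E)‖ = (r:ℝ) := by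
        rw [norm_smul, Real.norm_eq_abs, abs_of_pos hr, hω', mul_one]
      by_cases hmem : (r:ℝ) ∈ Icc α β
      · rw [indicator_of_mem hmem, indicator_of_mem (by
          simp only [mem_setOf_eq, hnr]; exact ⟨hmem.1, hmem.2⟩)]
      · rw [indicator_of_notMem hmem, indicator_of_notMem (by
          simp only [mem_setOf_eq, hnr]; exact fun h => hmem ⟨h.1, h.2⟩)]
    -- 1d integrability
    have hInt1u : Integrable (fun r : Ioi (0:ℝ) => (Icc α β).indicator u₀ (r:ℝ))
        (Measure.volumeIoiPow (dim E - 1)) := by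
      obtain ⟨ω', hω'⟩ := (polar_setIntegrable μ u hAnmeas hIntAn).prod_right_ae.exists
      exact hω'.congr (Filter.Eventually.of_forall fun r => hkeyu ω' r)
    have hInt1s : Integrable (fun r : Ioi (0:ℝ) => (Icc α β).indicator (fun _ => (1:ℝ)) (r:ℝ))
        (Measure.volumeIoiPow (dim E - 1)) := by
      obtain ⟨ω', hω'⟩ := (polar_setIntegrable μ (fun _ => (1:ℝ))
        hAnmeas honeAn).prod_right_ae.exists
      exact hω'.congr (Filter.Eventually.of_forall fun r => hkey1 ω' r)
    -- pointwise comparison:  EE-slice of u ≤ Icc-indicator of u₀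
    have hptu : ∀ r : Ioi (0:ℝ), EE.indicator u ((r:ℝ) • (ω:E))
        ≤ (Icc α β).indicator u₀ (r:ℝ) := by
      intro r
      have hr : 0 < (r:ℝ) := r.2
      by_cases hmem : (r:ℝ) • (ω:E) ∈ EE
      · rw [indicator_of_mem hmem,
          indicator_of_mem (hsubI (r:ℝ) hr (hEEdef ▸ hmem)), hval _ hr _ hωn]
      · rw [indicator_of_notMem hmem]
        by_cases hmem2 : (r:ℝ) ∈ Icc α β
        · rw [indicator_of_mem hmem2]; exact hu0nn _ hr
        · rw [indicator_of_notMem hmem2]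
    have hνle : (∫ r : Ioi (0:ℝ), EE.indicator u ((r:ℝ) • (ω:E))
        ∂(Measure.volumeIoiPow (dim E - 1)))
        ≤ ∫ r : Ioi (0:ℝ), (Icc α β).indicator u₀ (r:ℝ)
            ∂(Measure.volumeIoiPow (dim E - 1)) :=
      integral_mono_of_nonneg
        (Filter.Eventually.of_forall fun r => indicator_nonneg (fun y _ => hpos y) _)
        hInt1u (Filter.Eventually.of_forall hptu)
    -- a.e. equality of the 1-indicators
    have hboundary : (Measure.volumeIoiPow (dim E - 1))
        {r : Ioi (0:ℝ) | (r:ℝ) = α ∨ (r:ℝ) = β} = 0 := by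
      have hdecomp : {r : Ioi (0:ℝ) | (r:ℝ) = α ∨ (r:ℝ) = β}
          = {r : Ioi (0:ℝ) | (r:ℝ) = α} ∪ {r : Ioi (0:ℝ) | (r:ℝ) = β} := rfl
      rw [hdecomp]
      exact measure_union_null
        (Set.Subsingleton.measure_zero (fun a ha b hb => Subtype.ext (ha.trans hb.symm)) _)
        (Set.Subsingleton.measure_zero (fun a ha b hb => Subtype.ext (ha.trans hb.symm)) _)
    have hae1 : ∀ᵐ r : Ioi (0:ℝ) ∂(Measure.volumeIoiPow (dim E - 1)),
        EE.indicator (fun _ => (1:ℝ)) ((r:ℝ) • (ω:E))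
          = (Icc α β).indicator (fun _ => (1:ℝ)) (r:ℝ) := by
      rw [ae_iff]
      refine measure_mono_null ?_ hboundary
      intro r hrne
      simp only [mem_setOf_eq] at hrne ⊢
      by_contra hrab
      push_neg at hrab
      apply hrne
      have hr : 0 < (r:ℝ) := r.2
      by_cases hmem : (r:ℝ) • (ω:E) ∈ EE
      · have hIcc := hsubI (r:ℝ) hr (hEEdef ▸ hmem)
        rw [indicator_of_mem hmem, indicator_of_mem hIcc]
      · have hnoo : (r:ℝ) ∉ Ioo α β := fun hoo => hmem (hEEdef ▸ hsupI (r:ℝ) hr hoo)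
        have hnicc : (r:ℝ) ∉ Icc α β := by
          intro hicc
          rcases eq_or_lt_of_le hicc.1 with h | h
          · exact absurd h.symm hrab.1
          rcases eq_or_lt_of_le hicc.2 with h2 | h2
          · exact absurd h2 hrab.2
          exact hnoo ⟨h, h2⟩
        rw [indicator_of_notMem hmem, indicator_of_notMem hnicc]
    have hsgeq : (∫ r : Ioi (0:ℝ), EE.indicator (fun _ => (1:ℝ)) ((r:ℝ) • (ω:E))
        ∂(Measure.volumeIoiPow (dim E - 1)))
        = ∫ r : Ioi (0:ℝ), (Icc α β).indicator (fun _ => (1:ℝ)) (r:ℝ)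
            ∂(Measure.volumeIoiPow (dim E - 1)) :=
      integral_congr_ae hae1
    -- relate the 1d integrals to the annulus integrals
    have hPu : ∫ y in {y : E | α ≤ ‖y‖ ∧ ‖y‖ ≤ β}, u y ∂μ
        = (μ.toSphere univ).toReal * ∫ r : Ioi (0:ℝ), (Icc α β).indicator u₀ (r:ℝ)
            ∂(Measure.volumeIoiPow (dim E - 1)) := by
      rw [polar_setIntegral μ u hAnmeas hIntAn]
      have hfn : (fun ω' : sphere (0:E) 1 => ∫ r : Ioi (0:ℝ),
          ({y : E | α ≤ ‖y‖ ∧ ‖y‖ ≤ β}).indicator u ((r:ℝ) • (ω':E))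
            ∂(Measure.volumeIoiPow (dim E - 1)))
          = fun _ => ∫ r : Ioi (0:ℝ), (Icc α β).indicator u₀ (r:ℝ)
              ∂(Measure.volumeIoiPow (dim E - 1)) :=
        funext fun ω' => integral_congr_ae
          (Filter.Eventually.of_forall fun r => hkeyu ω' r)
      rw [hfn, integral_const, smul_eq_mul, measureReal_def]
    have hP1 : (μ {y : E | α ≤ ‖y‖ ∧ ‖y‖ ≤ β}).toReal
        = (μ.toSphere univ).toReal * ∫ r : Ioi (0:ℝ), (Icc α β).indicator (fun _ => (1:ℝ)) (r:ℝ)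
            ∂(Measure.volumeIoiPow (dim E - 1)) := by
      have h := polar_setIntegral μ (fun _ => (1:ℝ)) hAnmeas honeAn
      rw [setIntegral_const, smul_eq_mul, mul_one, measureReal_def] at h
      rw [h]
      have hfn : (fun ω' : sphere (0:E) 1 => ∫ r : Ioi (0:ℝ),
          ({y : E | α ≤ ‖y‖ ∧ ‖y‖ ≤ β}).indicator (fun _ => (1:ℝ)) ((r:ℝ) • (ω':E))
            ∂(Measure.volumeIoiPow (dim E - 1)))
          = fun _ => ∫ r : Ioi (0:ℝ), (Icc α β).indicator (fun _ => (1:ℝ)) (r:ℝ)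
              ∂(Measure.volumeIoiPow (dim E - 1)) :=
        funext fun ω' => integral_congr_ae
          (Filter.Eventually.of_forall fun r => hkey1 ω' r)
      rw [hfn, integral_const, smul_eq_mul, measureReal_def]
    obtain ⟨hle, hlt⟩ := hAnn α β hα0 hαT hTβ
    -- divide by the total sphere measure
    have hNab : (∫ r : Ioi (0:ℝ), (Icc α β).indicator u₀ (r:ℝ)
        ∂(Measure.volumeIoiPow (dim E - 1)))
        ≤ K * ∫ r : Ioi (0:ℝ), (Icc α β).indicator (fun _ => (1:ℝ)) (r:ℝ)
            ∂(Measure.volumeIoiPow (dim E - 1)) := by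
      rw [hPu, hP1] at hle
      nlinarith [hSpos]
    constructor
    · rw [hsgeq]; exact hνle.trans hNab
    · intro hsgpos
      rw [hsgeq] at hsgpos ⊢
      have hvolAnne : μ {y : E | α ≤ ‖y‖ ∧ ‖y‖ ≤ β} ≠ 0 := by
        intro h0
        rw [h0] at hP1
        simp only [ENNReal.toReal_zero] at hP1
        nlinarith [hSpos]
      have hstrict := hlt hvolAnne
      rw [hPu, hP1] at hstrict
      have hNab' : (∫ r : Ioi (0:ℝ), (Icc α β).indicator u₀ (r:ℝ)
          ∂(Measure.volumeIoiPow (dim E - 1)))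
          < K * ∫ r : Ioi (0:ℝ), (Icc α β).indicator (fun _ => (1:ℝ)) (r:ℝ)
              ∂(Measure.volumeIoiPow (dim E - 1)) := by
        nlinarith [hSpos]
      exact hνle.trans_lt hNab'
  -- final chain
  have c1 : ∫ y in Metric.ball x R, u y ∂μ ≤ ∫ y in EE, u y ∂μ := by
    refine setIntegral_mono_set hIntEE ?_ (HasSubset.Subset.eventuallyLE subset_union_left)
    exact Filter.Eventually.of_forall fun y => hpos y
  have c3 : (∫ ω : sphere (0:E) 1, (∫ r : Ioi (0:ℝ),
      EE.indicator u ((r:ℝ) • (ω:E)) ∂(Measure.volumeIoiPow (dim E - 1))) ∂μ.toSphere)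
      ≤ ∫ ω : sphere (0:E) 1, K * (∫ r : Ioi (0:ℝ),
        EE.indicator (fun _ => (1:ℝ)) ((r:ℝ) • (ω:E)) ∂(Measure.volumeIoiPow (dim E - 1)))
          ∂μ.toSphere :=
    integral_mono_ae hνint (hsgint.const_mul K) (hslice.mono fun ω h => h.1)
  have c4 : (∫ ω : sphere (0:E) 1, K * (∫ r : Ioi (0:ℝ),
      EE.indicator (fun _ => (1:ℝ)) ((r:ℝ) • (ω:E)) ∂(Measure.volumeIoiPow (dim E - 1)))
        ∂μ.toSphere) = K * (μ EE).toReal := by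
    rw [integral_const_mul, ← hEE1]
  have c5 : (μ EE).toReal ≤ (μ (Metric.ball x R)).toReal * 2 := by
    have h1 : (μ EE).toReal ≤ (2 * μ (Metric.ball x R)).toReal :=
      ENNReal.toReal_mono (ENNReal.mul_ne_top (by simp) hvolBfin) hvolEE2
    rw [ENNReal.toReal_mul] at h1
    simpa [mul_comm] using h1
  have hKE : K * (μ EE).toReal ≤ ∫ y in Metric.ball x R, u y ∂μ := by
    rw [hintBall]
    exact mul_le_mul_of_nonneg_left c5 hKnn
  have heq : (∫ ω : sphere (0:E) 1, (∫ r : Ioi (0:ℝ),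
      EE.indicator u ((r:ℝ) • (ω:E)) ∂(Measure.volumeIoiPow (dim E - 1))) ∂μ.toSphere)
      = ∫ ω : sphere (0:E) 1, K * (∫ r : Ioi (0:ℝ),
        EE.indicator (fun _ => (1:ℝ)) ((r:ℝ) • (ω:E)) ∂(Measure.volumeIoiPow (dim E - 1)))
          ∂μ.toSphere := by
    refine le_antisymm c3 ?_
    rw [c4, ← hEEu]
    exact hKE.trans c1
  have hzero : (∫ ω : sphere (0:E) 1, (K * (∫ r : Ioi (0:ℝ),
      EE.indicator (fun _ => (1:ℝ)) ((r:ℝ) • (ω:E)) ∂(Measure.volumeIoiPow (dim E - 1)))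
      - (∫ r : Ioi (0:ℝ), EE.indicator u ((r:ℝ) • (ω:E))
          ∂(Measure.volumeIoiPow (dim E - 1)))) ∂μ.toSphere) = 0 := by
    rw [integral_sub (hsgint.const_mul K) hνint, heq, sub_self]
  have haez := (integral_eq_zero_iff_of_nonneg_ae
    (hslice.mono fun ω h => sub_nonneg.2 h.1) ((hsgint.const_mul K).sub hνint)).1 hzero
  have hsg0 : (fun ω : sphere (0:E) 1 => ∫ r : Ioi (0:ℝ),
      EE.indicator (fun _ => (1:ℝ)) ((r:ℝ) • (ω:E)) ∂(Measure.volumeIoiPow (dim E - 1)))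
      =ᵐ[μ.toSphere] 0 := by
    filter_upwards [haez, hslice] with ω h1 h2
    simp only [Pi.zero_apply] at h1 ⊢
    rcases lt_or_ge 0 (∫ r : Ioi (0:ℝ), EE.indicator (fun _ => (1:ℝ)) ((r:ℝ) • (ω:E))
        ∂(Measure.volumeIoiPow (dim E - 1))) with hgt | hle'
    · exfalso
      have := h2.2 hgt
      linarith
    · exact le_antisymm hle' (hsgnn ω)
  have hEE0 : (μ EE).toReal = 0 := by
    rw [hEE1]
    exact integral_eq_zero_of_ae hsg0
  have hcontra : (μ (Metric.ball x R)).toReal ≤ (μ EE).toReal :=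
    ENNReal.toReal_mono hvolEEfin (measure_mono subset_union_left)
  rw [hEE0] at hcontra
  linarith


end CoreSec

theorem stmt_14 (n : ℕ) (u : EuclideanSpace ℝ (Fin n) → ℝ) (u₀ : ℝ → ℝ)
    (hrad : ∀ y, u y = u₀ ‖y‖) (hpos : ∀ y, 0 ≤ u y)
    (hloc : LocallyIntegrable u) (x : EuclideanSpace ℝ (Fin n)) (R : ℝ) (hR : 0 < R) :
    ∃ a b : ℝ, 0 ≤ a ∧ a ≤ ‖x‖ ∧ ‖x‖ ≤ b ∧
      ⨍ y in Metric.ball x R, u y ≤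
        2 * ⨍ y in {y : EuclideanSpace ℝ (Fin n) | a ≤ ‖y‖ ∧ ‖y‖ ≤ b}, u y := by
  by_cases hn : n = 0
  · refine ⟨0, ‖x‖, le_refl 0, norm_nonneg x, le_refl _, ?_⟩
    haveI hsub : Subsingleton (EuclideanSpace ℝ (Fin n)) := by
      subst hn; exact ⟨fun a b => by ext i; exact i.elim0⟩
    have hball : Metric.ball x R = univ := by
      ext y; simp only [mem_ball, mem_univ, iff_true, Subsingleton.elim y x]
      simpa using hR
    have hann : {y : EuclideanSpace ℝ (Fin n) | 0 ≤ ‖y‖ ∧ ‖y‖ ≤ ‖x‖} = univ := by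
      ext y; simp [Subsingleton.elim y x, norm_nonneg]
    rw [hball, hann]
    have h0 : 0 ≤ ⨍ y in (univ : Set (EuclideanSpace ℝ (Fin n))), u y := by
      rw [setAverage_eq]
      exact smul_nonneg (by positivity) (setIntegral_nonneg MeasurableSet.univ fun y _ => hpos y)
    linarith
  · have hn1 : 0 < n := Nat.pos_of_ne_zero hn
    haveI : Nontrivial (EuclideanSpace ℝ (Fin n)) := by
      refine ⟨⟨EuclideanSpace.single (⟨0, hn1⟩ : Fin n) (1:ℝ), 0, fun h => ?_⟩⟩
      have h1 : ‖EuclideanSpace.single (⟨0, hn1⟩ : Fin n) (1:ℝ)‖ = 1 := by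
        rw [EuclideanSpace.norm_single, norm_one]
      rw [h] at h1; simp at h1
    have hval : ∀ r : ℝ, 0 < r → ∀ ω : EuclideanSpace ℝ (Fin n), ‖ω‖ = 1 →
        u (r • ω) = u₀ r := by
      intro r hr ω hω
      rw [hrad, norm_smul, Real.norm_eq_abs, abs_of_pos hr, hω, mul_one]
    exact core volume u u₀ hval hpos hloc x R hR
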